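/- arXiv:1507.01424 — 2 statements merged into one kernel-verified Lean document; each statement's English description precedes it below -/
import Mathlib

section
/- Let H_i, H : [0,T]×ℝⁿ×ℝⁿ → ℝ, i ∈ ℕ, be continuous and convex in the last variable p, with L_i, L their Legendre–Fenchel conjugates in p and E_{L_i}(t,x), E_L(t,x) the epigraphs {(v,η) ∈ ℝⁿ×ℝ : L_i(t,x,v) ≤ η}, {(v,η) : L(t,x,v) ≤ η}. If H_i → H uniformly on compact subsets of [0,T]×ℝⁿ×ℝⁿ, then for every sequence (t_i,x_i) → (t,x) in [0,T]×ℝⁿ, the Painlevé–Kuratowski limit lim_{i→∞} E_{L_i}(t_i,x_i) exists and equals E_L(t,x); that is, limsup_{i→∞} E_{L_i}(t_i,x_i) ⊂ E_L(t,x) ⊂ liminf_{i→∞} E_{L_i}(t_i,x_i). -/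
open Filter Topology MeasureTheory Set Metric
open scoped RealInnerProductSpace Pointwise

set_option maxHeartbeats 1000000

noncomputable section

abbrev Eucl (n : ℕ) := EuclideanSpace ℝ (Fin n)

/-- Legendre–Fenchel transform in the last variable of a real-valued Hamiltonian:
`LFT H t x v = sup_p (⟪v,p⟫ − H t x p)`, with values in `EReal = ℝ ∪ {±∞}`. -/
def LFT {n : ℕ} (H : ℝ → Eucl n → Eucl n → ℝ) (t : ℝ) (x v : Eucl n) : EReal :=
  ⨆ p : Eucl n, ((⟪v, p⟫ - H t x p : ℝ) : EReal)

/-- Epigraph `E_L(t,x) = {(v,η) | L(t,x,v) ≤ η}` of the Lagrangian `L = LFT H`. -/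
def epiL {n : ℕ} (H : ℝ → Eucl n → Eucl n → ℝ) (t : ℝ) (x : Eucl n) : Set (Eucl n × ℝ) :=
  {q | LFT H t x q.1 ≤ (q.2 : EReal)}

/-- Legendre–Fenchel conjugate of an extended-real-valued function. -/
def eConj {n : ℕ} (φ : Eucl n → EReal) (v : Eucl n) : EReal :=
  ⨆ p : Eucl n, (((⟪v, p⟫ : ℝ) : EReal) - φ p)

/-- A modulus: `w(·,r)` measurable, `w(t,·)` nonnegative, nondecreasing, continuous,
subadditive with `w(t,0) = 0`. -/
def IsModulus (w : ℝ → ℝ → ℝ) : Prop :=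
  (∀ r, Measurable fun t => w t r) ∧
  ∀ t, (∀ r, 0 ≤ w t r) ∧ Monotone (w t) ∧ Continuous (w t) ∧
    (∀ a b : ℝ, 0 ≤ a → 0 ≤ b → w t (a + b) ≤ w t a + w t b) ∧ w t 0 = 0

/-- Convexity of an `EReal`-valued function. -/
def EConvex {F : Type*} [AddCommMonoid F] [Module ℝ F] (φ : F → EReal) : Prop :=
  ∀ v u : F, ∀ a b : ℝ, 0 ≤ a → 0 ≤ b → a + b = 1 →
    φ (a • v + b • u) ≤ (a : EReal) * φ v + (b : EReal) * φ u

/-- A proper extended-real-valued function: never `−∞` and not identically `+∞`. -/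
def EProper {F : Type*} (φ : F → EReal) : Prop :=
  (∀ v, φ v ≠ ⊥) ∧ ∃ v, φ v ≠ ⊤

namespace EpiKC

variable {n : ℕ}

lemma mem_epiL_iff {H : ℝ → Eucl n → Eucl n → ℝ} {t : ℝ} {x : Eucl n} {q : Eucl n × ℝ} :
    q ∈ epiL H t x ↔ ∀ p, ⟪q.1, p⟫ - H t x p ≤ q.2 := by
  unfold epiL LFT
  simp only [Set.mem_setOf_eq, iSup_le_iff]
  exact forall_congr' fun p => EReal.coe_le_coe_iff

lemma seq_of_forall_eventually {X : Type*} [MetricSpace X] {S : ℕ → Set X} {q : X}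
    (h : ∀ ε > 0, ∀ᶠ i in atTop, ∃ y ∈ S i, dist y q < ε) :
    ∃ qi : ℕ → X, Tendsto qi atTop (𝓝 q) ∧ ∀ᶠ i in atTop, qi i ∈ S i := by
  classical
  have hne : ∀ᶠ i in atTop, (S i).Nonempty := by
    filter_upwards [h 1 one_pos] with i hi
    obtain ⟨y, hy, -⟩ := hi
    exact ⟨y, hy⟩
  have hlt : ∀ i : ℕ, (S i).Nonempty →
      Metric.infDist q (S i) < Metric.infDist q (S i) + 1 / ((i : ℝ) + 1) := by
    intro i _
    have : (0:ℝ) < 1 / ((i : ℝ) + 1) := by positivity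
    linarith
  set qi : ℕ → X := fun i =>
    if hi : (S i).Nonempty then ((Metric.infDist_lt_iff hi).mp (hlt i hi)).choose else q with hqi
  have hmem : ∀ i : ℕ, (S i).Nonempty →
      qi i ∈ S i ∧ dist q (qi i) < Metric.infDist q (S i) + 1 / ((i : ℝ) + 1) := by
    intro i hi
    have hs := ((Metric.infDist_lt_iff hi).mp (hlt i hi)).choose_spec
    simp only [hqi, dif_pos hi]
    exact ⟨hs.1, hs.2⟩
  have hd0 : Tendsto (fun i => Metric.infDist q (S i)) atTop (𝓝 0) := by
    refine Metric.tendsto_atTop.mpr fun ε hε => ?_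
    obtain ⟨N, hN⟩ := eventually_atTop.mp (h ε hε)
    refine ⟨N, fun i hi => ?_⟩
    obtain ⟨y, hyS, hyd⟩ := hN i hi
    have h1 : Metric.infDist q (S i) ≤ dist q y := Metric.infDist_le_dist_of_mem hyS
    have h2 : (0:ℝ) ≤ Metric.infDist q (S i) := Metric.infDist_nonneg
    rw [Real.dist_eq, sub_zero, abs_of_nonneg h2]
    calc Metric.infDist q (S i) ≤ dist q y := h1
      _ = dist y q := dist_comm _ _
      _ < ε := hyd
  refine ⟨qi, ?_, ?_⟩
  · rw [tendsto_iff_dist_tendsto_zero]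
    refine squeeze_zero' (g := fun i : ℕ => Metric.infDist q (S i) + 1 / ((i : ℝ) + 1))
      (Filter.Eventually.of_forall fun i => dist_nonneg) ?_ ?_
    · filter_upwards [hne] with i hi
      have := (hmem i hi).2
      rw [dist_comm]
      exact this.le
    · have h0 : Tendsto (fun i : ℕ => Metric.infDist q (S i) + 1 / ((i : ℝ) + 1)) atTop
          (𝓝 (0 + 0)) := hd0.add tendsto_one_div_add_atTop_nhds_zero_nat
      simpa using h0
  · filter_upwards [hne] with i hi using (hmem i hi).1

lemma core_single (f g : Eucl n → ℝ) (hgc : Continuous g)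
    (hgconv : ConvexOn ℝ (univ : Set (Eucl n)) g)
    (v : Eucl n) (η : ℝ) (hq : ∀ p, ⟪v, p⟫ - f p ≤ η)
    (ε A R : ℝ) (hε0 : 0 < ε) (hε1 : ε ≤ 1)
    (hA : η + f 0 + 2 ≤ A)
    (hR1 : 1 ≤ R) (hR2 : 4 * (A + 1) / ε ≤ R) (hR3 : 2 * A ^ 2 / ε ^ 2 ≤ R)
    (hE : ∀ p : Eucl n, ‖p‖ ≤ R → |g p - f p| ≤ min 1 (ε / 2)) :
    ∃ v' : Eucl n, ‖v' - v‖ ≤ ε ∧ ∀ p, ⟪v', p⟫ - g p ≤ η + ε := by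
  have hR0 : 0 < R := lt_of_lt_of_le one_pos hR1
  have hη0 : 0 ≤ η + f 0 := by
    have h := hq 0
    simp only [inner_zero_right] at h
    linarith
  have hA2 : 2 ≤ A := by linarith
  have hA0 : 0 < A := by linarith
  set lam : ℝ := ε / (2 * R) with hlam_def
  have hlam0 : 0 < lam := by positivity
  have hlamR : lam * R = ε / 2 := by
    rw [hlam_def]; field_simp
  have hlam1 : lam ≤ 1 := by
    rw [hlam_def, div_le_one (by positivity)]
    linarith
  have hE1 : ∀ p : Eucl n, ‖p‖ ≤ R → f p - 1 ≤ g p ∧ g p ≤ f p + 1 := by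
    intro p hp
    have h1 : |g p - f p| ≤ 1 := le_trans (hE p hp) (min_le_left _ _)
    have h2 := abs_le.mp h1
    exact ⟨by linarith [h2.1], by linarith [h2.2]⟩
  have hEε : ∀ p : Eucl n, ‖p‖ ≤ R → f p - ε / 2 ≤ g p := by
    intro p hp
    have h1 := le_trans (hE p hp) (min_le_right _ _)
    have h2 := abs_le.mp h1
    linarith [h2.1]
  have hg0 : g 0 ≤ f 0 + 1 := (hE1 0 (by simpa using hR0.le)).2
  have hF1 : ∀ p : Eucl n, ‖p‖ ≤ R → ⟪v, p⟫ - g p ≤ η + ε / 2 := by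
    intro p hp
    have h1 := hEε p hp
    have h2 := hq p
    linarith
  have hF2 : ∀ p : Eucl n, R ≤ ‖p‖ → ⟪v, p⟫ - g p ≤ ‖p‖ / R * A - f 0 := by
    intro p hp
    have hp0 : 0 < ‖p‖ := lt_of_lt_of_le hR0 hp
    set s : ℝ := R / ‖p‖ with hs_def
    have hs0 : 0 < s := by positivity
    have hs1 : s ≤ 1 := by
      rw [hs_def, div_le_one hp0]; exact hp
    have hqn : ‖s • p‖ = R := by
      rw [norm_smul, Real.norm_eq_abs, abs_of_pos hs0, hs_def]
      field_simp
    have hconv : g (s • p) ≤ s * g p + (1 - s) * g 0 := by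
      have h := hgconv.2 (mem_univ p) (mem_univ (0 : Eucl n)) hs0.le
        (by linarith : (0:ℝ) ≤ 1 - s) (by ring)
      simpa [smul_zero] using h
    have hgq : s * ⟪v, p⟫ - η - 1 ≤ g (s • p) := by
      have h1 := (hE1 (s • p) (le_of_eq hqn)).1
      have h2 := hq (s • p)
      rw [real_inner_smul_right] at h2
      linarith
    have hkey : s * ⟪v, p⟫ - η - 1 - (1 - s) * (f 0 + 1) ≤ s * g p := by nlinarith [hg0]
    rw [← mul_le_mul_iff_right₀ hs0]
    have e : s * (‖p‖ / R * A) = A := by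
      rw [hs_def]; field_simp
    nlinarith [hkey, e, hA, hs0.le, hs1]
  have hF2m : ∀ p : Eucl n, R ≤ ‖p‖ → R * (⟪v, p⟫ - g p) ≤ ‖p‖ * A - R * f 0 := by
    intro p hp
    have h1 := hF2 p hp
    have e : R * (‖p‖ / R * A) = ‖p‖ * A := by field_simp
    nlinarith [mul_le_mul_of_nonneg_left h1 hR0.le, e]
  set G : Eucl n → ℝ := fun p => g p - ⟪v, p⟫ + lam / 2 * ‖p‖ ^ 2 with hG_def
  set ρ : ℝ := max R (max (4 * A / (lam * R)) (2 / lam)) with hρ_def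
  have hρR : R ≤ ρ := le_max_left _ _
  have hρ0 : 0 < ρ := lt_of_lt_of_le hR0 hρR
  have hcoerc : ∀ p : Eucl n, ρ < ‖p‖ → f 0 + 1 < G p := by
    intro p hp
    have hpR : R ≤ ‖p‖ := le_trans hρR hp.le
    have hp0 : 0 < ‖p‖ := lt_of_lt_of_le hR0 hpR
    have hp1 : 4 * A < ‖p‖ * (lam * R) := by
      have h : 4 * A / (lam * R) < ‖p‖ :=
        lt_of_le_of_lt (le_trans (le_max_left _ _) (le_max_right _ _)) hp
      rwa [div_lt_iff₀ (by positivity)] at h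
    have hp2 : 2 < ‖p‖ * lam := by
      have h : 2 / lam < ‖p‖ :=
        lt_of_le_of_lt (le_trans (le_max_right _ _) (le_max_right _ _)) hp
      rwa [div_lt_iff₀ hlam0] at h
    have hm := hF2m p hpR
    rw [← mul_lt_mul_iff_right₀ hR0]
    simp only [hG_def]
    nlinarith [mul_lt_mul_of_pos_left hp1 hp0, mul_lt_mul_of_pos_right hp2 hp0,
      mul_pos hlam0 hp0, hlam1, hR0, hp0, mul_pos hR0 hp0]
  have hGcont : Continuous G := by
    rw [hG_def]
    exact (hgc.sub (continuous_const.inner continuous_id)).add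
      (continuous_const.mul ((continuous_norm).pow 2))
  obtain ⟨p₀, hp₀mem, hp₀min⟩ := (isCompact_closedBall (0 : Eucl n) (ρ + 1)).exists_isMinOn
    ⟨0, mem_closedBall_self (by linarith)⟩ hGcont.continuousOn
  have hG0 : G 0 = g 0 := by simp [hG_def]
  have hglob : ∀ p, G p₀ ≤ G p := by
    intro p
    by_cases hp : p ∈ closedBall (0 : Eucl n) (ρ + 1)
    · exact hp₀min hp
    · have hpn : ρ < ‖p‖ := by
        simp only [mem_closedBall, dist_zero_right, not_le] at hp
        linarith
      have h1 := hcoerc p hpn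
      have h2 : G p₀ ≤ G 0 := hp₀min (mem_closedBall_self (by linarith))
      rw [hG0] at h2
      linarith
  have hGp₀ : G p₀ ≤ f 0 + 1 := by
    have h2 : G p₀ ≤ G 0 := hglob 0
    rw [hG0] at h2
    linarith
  have hF8 : lam * ‖p₀‖ ≤ ε / 2 := by
    by_cases hc : ‖p₀‖ ≤ R
    · calc lam * ‖p₀‖ ≤ lam * R := mul_le_mul_of_nonneg_left hc hlam0.le
        _ = ε / 2 := hlamR
    · push_neg at hc
      have hp₀0 : 0 < ‖p₀‖ := lt_trans hR0 hc
      have hm := hF2m p₀ hc.le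
      have h1 : R * (lam / 2) * ‖p₀‖ ^ 2 ≤ R + ‖p₀‖ * A := by
        have h2 := mul_le_mul_of_nonneg_left hGp₀ hR0.le
        simp only [hG_def] at h2
        nlinarith [hm]
      have h3 : lam * R * ‖p₀‖ ≤ 2 * (A + 1) := by
        nlinarith [h1, hc, hp₀0, hR0]
      have h4 : 4 * (A + 1) ≤ R * ε := (div_le_iff₀ hε0).mp hR2
      nlinarith [h3, h4, hR0, hp₀0]
  have hF9 : -(η + ε / 2) ≤ G p₀ := by
    by_cases hc : ‖p₀‖ ≤ R
    · have h1 := hF1 p₀ hc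
      simp only [hG_def]
      nlinarith [sq_nonneg ‖p₀‖, hlam0.le]
    · push_neg at hc
      have hm := hF2m p₀ hc.le
      have hA2R : A ^ 2 ≤ R * ε ^ 2 / 2 := by
        have h := (div_le_iff₀ (by positivity : (0:ℝ) < ε ^ 2)).mp hR3
        linarith
      rw [← mul_le_mul_iff_right₀ hR0]
      simp only [hG_def]
      nlinarith [hm, sq_nonneg (lam * R * ‖p₀‖ - A), hlamR, hA2R, hε0, hR0, hη0,
        mul_nonneg (mul_nonneg hε0.le hR0.le) hη0]
  refine ⟨v - lam • p₀, ?_, ?_⟩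
  · have he : v - lam • p₀ - v = -(lam • p₀) := by abel
    rw [he, norm_neg, norm_smul, Real.norm_eq_abs, abs_of_pos hlam0]
    linarith [hF8]
  · intro p
    have hsub : ⟪v - lam • p₀, p - p₀⟫ ≤ g p - g p₀ := by
      refine le_of_forall_pos_le_add fun c hc => ?_
      set D : ℝ := lam / 2 * ‖p - p₀‖ ^ 2 with hD_def
      have hD0 : 0 ≤ D := by positivity
      set σ : ℝ := min 1 (c / (D + 1)) with hσ_def
      have hσ0 : 0 < σ := lt_min one_pos (by positivity)
      have hσ1 : σ ≤ 1 := min_le_left _ _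
      have hσD : σ * D ≤ c := by
        have h1 : σ ≤ c / (D + 1) := min_le_right _ _
        have h2 := mul_le_mul_of_nonneg_right h1 hD0
        calc σ * D ≤ c / (D + 1) * D := h2
          _ ≤ c := by
            rw [div_mul_eq_mul_div, div_le_iff₀ (by positivity)]
            nlinarith
      have hmin := hglob (p₀ + σ • (p - p₀))
      have hptσ : p₀ + σ • (p - p₀) = (1 - σ) • p₀ + σ • p := by
        rw [smul_sub, sub_smul, one_smul]; abel
      have hconv : g (p₀ + σ • (p - p₀)) ≤ (1 - σ) * g p₀ + σ * g p := by
        rw [hptσ]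
        exact hgconv.2 (mem_univ p₀) (mem_univ p) (by linarith : (0:ℝ) ≤ 1 - σ) hσ0.le
          (by ring)
      have hinner : ⟪v, p₀ + σ • (p - p₀)⟫ = ⟪v, p₀⟫ + σ * ⟪v, p - p₀⟫ := by
        rw [inner_add_right, real_inner_smul_right]
      have hnorm : ‖p₀ + σ • (p - p₀)‖ ^ 2
          = ‖p₀‖ ^ 2 + 2 * (σ * ⟪p₀, p - p₀⟫) + σ ^ 2 * ‖p - p₀‖ ^ 2 := by
        rw [norm_add_sq_real, real_inner_smul_right, norm_smul, Real.norm_eq_abs,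
          mul_pow, sq_abs]
      have hvl : ⟪v - lam • p₀, p - p₀⟫ = ⟪v, p - p₀⟫ - lam * ⟪p₀, p - p₀⟫ := by
        rw [inner_sub_left, real_inner_smul_left]
      simp only [hG_def] at hmin
      rw [hinner, hnorm] at hmin
      have key : 0 ≤ σ * ((g p - g p₀) - ⟪v - lam • p₀, p - p₀⟫ + σ * D) := by
        rw [hvl, hD_def]
        nlinarith [hmin, hconv]
      have key2 : 0 ≤ (g p - g p₀) - ⟪v - lam • p₀, p - p₀⟫ + σ * D :=
        (mul_nonneg_iff_of_pos_left hσ0).mp key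
      linarith [key2, hσD]
    have hvp : ⟪v - lam • p₀, p - p₀⟫ = ⟪v - lam • p₀, p⟫ - ⟪v - lam • p₀, p₀⟫ :=
      inner_sub_right _ _ _
    have hid : ⟪v - lam • p₀, p₀⟫ = ⟪v, p₀⟫ - lam * ‖p₀‖ ^ 2 := by
      rw [inner_sub_left, real_inner_smul_left, real_inner_self_eq_norm_sq]
    rw [hvp, hid] at hsub
    simp only [hG_def] at hF9
    nlinarith [hsub, hF9, mul_nonneg hlam0.le (sq_nonneg ‖p₀‖), hε0]

end EpiKC

/-- Proposition 6.3 of the paper. If continuous Hamiltonians `H_i`,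
convex in the last variable, converge to `H` uniformly on compact subsets of
`[0,T]×ℝⁿ×ℝⁿ`, then for every sequence `(t_i,x_i) → (t,x)` in `[0,T]×ℝⁿ` the epigraphs
converge in the Painlevé–Kuratowski sense:
`limsup E_{L_i}(t_i,x_i) ⊆ E_L(t,x) ⊆ liminf E_{L_i}(t_i,x_i)`. -/
theorem epigraph_kuratowski_convergence (n : ℕ) (T : ℝ) (hT : 0 ≤ T)
    (Hi : ℕ → ℝ → Eucl n → Eucl n → ℝ) (H : ℝ → Eucl n → Eucl n → ℝ)
    (hHic : ∀ i, ContinuousOn (fun q : ℝ × Eucl n × Eucl n => Hi i q.1 q.2.1 q.2.2)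
      (Icc (0 : ℝ) T ×ˢ (univ : Set (Eucl n × Eucl n))))
    (hHc : ContinuousOn (fun q : ℝ × Eucl n × Eucl n => H q.1 q.2.1 q.2.2)
      (Icc (0 : ℝ) T ×ˢ (univ : Set (Eucl n × Eucl n))))
    (hHiconv : ∀ i, ∀ t ∈ Icc (0 : ℝ) T, ∀ x : Eucl n, ConvexOn ℝ univ (Hi i t x))
    (hHconv : ∀ t ∈ Icc (0 : ℝ) T, ∀ x : Eucl n, ConvexOn ℝ univ (H t x))
    (hunif : ∀ K : Set (ℝ × Eucl n × Eucl n), IsCompact K →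
      K ⊆ Icc (0 : ℝ) T ×ˢ (univ : Set (Eucl n × Eucl n)) →
      TendstoUniformlyOn (fun i q => Hi i q.1 q.2.1 q.2.2)
        (fun q => H q.1 q.2.1 q.2.2) atTop K) :
    ∀ t ∈ Icc (0 : ℝ) T, ∀ x : Eucl n, ∀ (ti : ℕ → ℝ) (xi : ℕ → Eucl n),
      (∀ i, ti i ∈ Icc (0 : ℝ) T) →
      Tendsto ti atTop (𝓝 t) → Tendsto xi atTop (𝓝 x) →
      -- limsup E_{L_i}(t_i,x_i) ⊆ E_L(t,x)
      ({q : Eucl n × ℝ | ∃ φ : ℕ → ℕ, StrictMono φ ∧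
          ∃ qj : ℕ → Eucl n × ℝ, Tendsto qj atTop (𝓝 q) ∧
            ∀ j, qj j ∈ epiL (Hi (φ j)) (ti (φ j)) (xi (φ j))} ⊆ epiL H t x) ∧
      -- E_L(t,x) ⊆ liminf E_{L_i}(t_i,x_i)
      (epiL H t x ⊆
        {q : Eucl n × ℝ | ∃ qi : ℕ → Eucl n × ℝ, Tendsto qi atTop (𝓝 q) ∧
          ∀ᶠ i in atTop, qi i ∈ epiL (Hi i) (ti i) (xi i)}) := by
  intro t ht x ti xi hti htt hxt
  have hEv : ∀ R : ℝ, 0 < R → ∀ δ : ℝ, 0 < δ →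
      ∀ᶠ i in atTop, ∀ p : Eucl n, ‖p‖ ≤ R → |Hi i (ti i) (xi i) p - H t x p| ≤ δ := by
    intro R hR δ hδ
    set Kx : Set (Eucl n) := insert x (Set.range xi) with hKx_def
    have hKxc : IsCompact Kx := hxt.isCompact_insert_range
    set K : Set (ℝ × Eucl n × Eucl n) := Icc (0:ℝ) T ×ˢ (Kx ×ˢ closedBall (0 : Eucl n) R)
      with hK_def
    have hKc : IsCompact K := isCompact_Icc.prod (hKxc.prod (isCompact_closedBall _ _))
    have hKsub : K ⊆ Icc (0:ℝ) T ×ˢ (univ : Set (Eucl n × Eucl n)) :=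
      Set.prod_mono subset_rfl (subset_univ _)
    have hu := (Metric.tendstoUniformlyOn_iff.mp (hunif K hKc hKsub)) (δ/2) (by positivity)
    have hHK : ContinuousOn (fun q : ℝ × Eucl n × Eucl n => H q.1 q.2.1 q.2.2) K :=
      hHc.mono hKsub
    have hucont := hKc.uniformContinuousOn_of_continuous hHK
    obtain ⟨δ', hδ'0, hδ'⟩ := Metric.uniformContinuousOn_iff.mp hucont (δ/2) (by positivity)
    have h1 : ∀ᶠ i in atTop, dist (ti i) t < δ' := (Metric.tendsto_nhds.mp htt) δ' hδ'0
    have h2 : ∀ᶠ i in atTop, dist (xi i) x < δ' := (Metric.tendsto_nhds.mp hxt) δ' hδ'0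
    filter_upwards [hu, h1, h2] with i hui h1i h2i
    intro p hp
    have hpK : p ∈ closedBall (0 : Eucl n) R := by
      simpa [mem_closedBall, dist_zero_right] using hp
    have haK : ((ti i), ((xi i), p)) ∈ K :=
      ⟨hti i, Set.mem_insert_iff.mpr (Or.inr ⟨i, rfl⟩), hpK⟩
    have hbK : (t, (x, p)) ∈ K := ⟨ht, Set.mem_insert _ _, hpK⟩
    have hd : dist ((ti i), ((xi i), p)) (t, (x, p)) < δ' := by
      rw [Prod.dist_eq, Prod.dist_eq]
      simp only [dist_self]
      exact max_lt h1i (max_lt h2i hδ'0)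
    have e2 : dist (H (ti i) (xi i) p) (Hi i (ti i) (xi i) p) < δ / 2 := hui _ haK
    have e3 : dist (H t x p) (H (ti i) (xi i) p) < δ / 2 :=
      hδ' _ hbK _ haK (by rw [dist_comm]; exact hd)
    have e1 : dist (H t x p) (Hi i (ti i) (xi i) p)
        ≤ dist (H t x p) (H (ti i) (xi i) p) + dist (H (ti i) (xi i) p) (Hi i (ti i) (xi i) p) :=
      dist_triangle _ _ _
    have e4 : dist (Hi i (ti i) (xi i) p) (H t x p) ≤ δ := by
      rw [dist_comm]; linarith
    rw [← Real.dist_eq]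
    exact e4
  have hkey : ∀ p : Eucl n, Tendsto (fun i => Hi i (ti i) (xi i) p) atTop (𝓝 (H t x p)) := by
    intro p
    rw [Metric.tendsto_atTop]
    intro ε hε
    obtain ⟨N, hN⟩ := eventually_atTop.mp (hEv (‖p‖ + 1) (by positivity) (ε/2) (by positivity))
    refine ⟨N, fun i hi => ?_⟩
    have h := hN i hi p (by linarith)
    rw [Real.dist_eq]
    linarith
  constructor
  · rintro ⟨v, η⟩ ⟨φ, hφ, qj, hqj, hq⟩
    rw [EpiKC.mem_epiL_iff]
    intro p
    have h1 : ∀ j, ⟪(qj j).1, p⟫ - Hi (φ j) (ti (φ j)) (xi (φ j)) p ≤ (qj j).2 :=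
      fun j => EpiKC.mem_epiL_iff.mp (hq j) p
    have t1 : Tendsto (fun j => (qj j).1) atTop (𝓝 v) := (continuous_fst.tendsto _).comp hqj
    have t2 : Tendsto (fun j => (qj j).2) atTop (𝓝 η) := (continuous_snd.tendsto _).comp hqj
    have t3 : Tendsto (fun j => Hi (φ j) (ti (φ j)) (xi (φ j)) p) atTop (𝓝 (H t x p)) :=
      (hkey p).comp hφ.tendsto_atTop
    have t4 : Tendsto (fun j => ⟪(qj j).1, p⟫ - Hi (φ j) (ti (φ j)) (xi (φ j)) p) atTop
        (𝓝 (⟪v, p⟫ - H t x p)) := (t1.inner tendsto_const_nhds).sub t3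
    exact le_of_tendsto_of_tendsto' t4 t2 h1
  · rintro ⟨v, η⟩ hv
    replace hv : ∀ p, ⟪v, p⟫ - H t x p ≤ η := fun p => EpiKC.mem_epiL_iff.mp hv p
    simp only [Set.mem_setOf_eq]
    apply EpiKC.seq_of_forall_eventually
    intro ε hε
    set ε₀ : ℝ := min (ε / 2) 1 with hε₀_def
    have hε₀0 : 0 < ε₀ := lt_min (by positivity) one_pos
    have hε₀1 : ε₀ ≤ 1 := min_le_right _ _
    have hε₀ε : ε₀ ≤ ε / 2 := min_le_left _ _
    set A : ℝ := η + H t x 0 + 2 with hA_def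
    set R : ℝ := max 1 (max (4 * (A + 1) / ε₀) (2 * A ^ 2 / ε₀ ^ 2)) with hR_def
    have hR1 : 1 ≤ R := le_max_left _ _
    have hR0 : 0 < R := lt_of_lt_of_le one_pos hR1
    filter_upwards [hEv R hR0 (min 1 (ε₀/2)) (lt_min one_pos (by positivity))] with i hEi
    have hgc : Continuous fun p : Eucl n => Hi i (ti i) (xi i) p := by
      rw [← continuousOn_univ]
      have hm : Continuous fun p : Eucl n => ((ti i : ℝ), ((xi i : Eucl n), p)) :=
        continuous_const.prodMk (continuous_const.prodMk continuous_id)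
      exact (hHic i).comp hm.continuousOn fun p _ => ⟨hti i, mem_univ _⟩
    obtain ⟨v', hv'1, hv'2⟩ := EpiKC.core_single (H t x) (Hi i (ti i) (xi i)) hgc
      (hHiconv i (ti i) (hti i) (xi i)) v η hv ε₀ A R hε₀0 hε₀1 le_rfl
      hR1 (le_trans (le_max_left _ _) (le_max_right _ _))
      (le_trans (le_max_right _ _) (le_max_right _ _)) hEi
    refine ⟨(v', η + ε₀), EpiKC.mem_epiL_iff.mpr (fun p => hv'2 p), ?_⟩
    have d1 : dist v' v ≤ ε₀ := by rw [dist_eq_norm]; exact hv'1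
    have d2 : dist (η + ε₀) η = ε₀ := by
      rw [Real.dist_eq, add_sub_cancel_left]
      exact abs_of_pos hε₀0
    calc dist ((v', η + ε₀) : Eucl n × ℝ) (v, η)
        = max (dist v' v) (dist (η + ε₀) η) := Prod.dist_eq
      _ ≤ ε₀ := by rw [d2]; exact max_le d1 le_rfl
      _ < ε := by linarith
end
end

section
/- Let H_i, H : [0,T]×ℝⁿ×ℝⁿ → ℝ, i ∈ ℕ, be continuous and convex in the last variable p, with L_i, L their Legendre–Fenchel conjugates in p and E_{L_i}, E_L the corresponding epigraph maps. If for every R > 0 one has sup_{(t,x,p) ∈ [0,T]×B_R×ℝⁿ} |H_i(t,x,p) − H(t,x,p)|/(1+|p|) → 0 as i → ∞, then for every R > 0, sup_{(t,x) ∈ [0,T]×B_R} ℋ(E_{L_i}(t,x), E_L(t,x)) → 0 as i → ∞. -/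
open Filter Topology MeasureTheory Set Metric
open scoped RealInnerProductSpace Pointwise

noncomputable section

lemma scalar_aux {t M : ℝ} (h : ∀ s : ℝ, 0 < s → s * t ≤ M) : t ≤ 0 := by
  by_contra ht
  push_neg at ht
  have h1 := h ((|M| + 1) / t) (by positivity)
  rw [div_mul_cancel₀ _ (ne_of_gt ht)] at h1
  have := le_abs_self M
  linarith

lemma sandwich {n : ℕ} (g φ : Eucl n → ℝ) (hg : ConvexOn ℝ univ g) (hgc : Continuous g)
    (hφ : ConcaveOn ℝ univ φ) (hle : ∀ p, φ p ≤ g p) :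
    ∃ (w : Eucl n) (β : ℝ), (∀ p, φ p ≤ ⟪w, p⟫ + β) ∧ (∀ p, ⟪w, p⟫ + β ≤ g p) := by
  set A : Set (Eucl n × ℝ) := {q | g q.1 < q.2} with hA
  set B : Set (Eucl n × ℝ) := {q | q.2 ≤ φ q.1} with hB
  have hAconv : Convex ℝ A := by
    have := hg.convex_strict_epigraph
    convert this using 1
    ext q; simp [hA]
  have hBconv : Convex ℝ B := by
    have := hφ.convex_hypograph
    convert this using 1
    ext q; simp [hB]
  have hAopen : IsOpen A := by
    have : A = (fun q : Eucl n × ℝ => q.2 - g q.1) ⁻¹' (Ioi 0) := by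
      ext q; simp [hA, sub_pos]
    rw [this]
    exact isOpen_Ioi.preimage (by fun_prop)
  have hdisj : Disjoint A B := by
    rw [Set.disjoint_left]
    intro q hqA hqB
    exact absurd (lt_of_lt_of_le hqA (le_trans hqB (hle q.1))) (lt_irrefl _)
  obtain ⟨F, u, hFA, hFB⟩ := geometric_hahn_banach_open hAconv hAopen hBconv hdisj
  set lam : ℝ := F (0, 1) with hlamdef
  have hsplit : ∀ (p : Eucl n) (r : ℝ), F (p, r) = F (p, 0) + r * lam := by
    intro p r
    have h1 : (p, r) = (p, (0:ℝ)) + r • ((0 : Eucl n), (1:ℝ)) := by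
      simp [Prod.ext_iff]
    rw [h1, map_add, _root_.map_smul]
    simp [smul_eq_mul]
    exact Or.inl hlamdef.symm
  have hmemA : ∀ (p : Eucl n) (s : ℝ), 0 < s → (p, g p + s) ∈ A := by
    intro p s hs; simp [hA]; linarith
  have hmemB : ∀ p : Eucl n, (p, φ p) ∈ B := fun p => le_refl (φ p)
  have hlam_ne : lam ≠ 0 := by
    intro h0
    have h1 := hFA _ (hmemA 0 1 one_pos)
    have h2 := hFB _ (hmemB 0)
    rw [hsplit, h0] at h1 h2
    linarith
  have hlam_le : lam ≤ 0 := by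
    have : ∀ s : ℝ, 0 < s → s * lam ≤ u - F ((0 : Eucl n), 0) - g 0 * lam := by
      intro s hs
      have := hFA _ (hmemA 0 s hs)
      rw [hsplit] at this
      nlinarith
    exact scalar_aux this
  have hlam : lam < 0 := lt_of_le_of_ne hlam_le hlam_ne
  -- the affine minorant
  have hAub : ∀ p : Eucl n, F (p, 0) + g p * lam ≤ u := by
    intro p
    by_contra hcon
    push_neg at hcon
    have hs : (0:ℝ) < (F (p, 0) + g p * lam - u) / (-lam) := div_pos (by linarith) (by linarith)
    have h1 := hFA _ (hmemA p _ hs)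
    rw [hsplit] at h1
    have h2 : ((F (p, 0) + g p * lam - u) / (-lam)) * (-lam) = F (p, 0) + g p * lam - u :=
      div_mul_cancel₀ _ (by linarith)
    nlinarith
  have hBlb : ∀ p : Eucl n, u ≤ F (p, 0) + φ p * lam := by
    intro p
    have := hFB _ (hmemB p)
    rwa [hsplit] at this
  set G : Eucl n →L[ℝ] ℝ := (-(1/lam)) • (F.comp ((ContinuousLinearMap.inl ℝ (Eucl n) ℝ))) with hG
  refine ⟨(InnerProductSpace.toDual ℝ (Eucl n)).symm G, u / lam, ?_, ?_⟩ <;> intro p <;>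
      rw [InnerProductSpace.toDual_symm_apply] <;>
      rw [show G p = -(1/lam) * F (p, 0) by simp [hG]] <;>
      rw [show -(1/lam) * F (p, 0) + u / lam = (u - F (p, 0)) / lam by field_simp; ring]
  · rw [le_div_iff_of_neg hlam]
    have := hBlb p
    linarith
  · rw [div_le_iff_of_neg hlam]
    have := hAub p
    linarith

lemma key_lemma {n : ℕ} (f g : Eucl n → ℝ) (hg : ConvexOn ℝ univ g) (hgc : Continuous g)
    (δ : ℝ) (hδ : 0 < δ) (hfg : ∀ p, |f p - g p| ≤ δ * (1 + ‖p‖))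
    (v : Eucl n) (η : ℝ) (hv : ∀ p, ⟪v, p⟫ - f p ≤ η) :
    ∃ w : Eucl n, ‖v - w‖ ≤ δ ∧ ∀ p, ⟪w, p⟫ - g p ≤ η + δ := by
  set c : ℝ := η + δ with hc
  set φ : Eucl n → ℝ := fun p => ⟪v, p⟫ - δ * ‖p‖ - c with hφdef
  have hφ : ConcaveOn ℝ univ φ := by
    refine ⟨convex_univ, ?_⟩
    intro p _ q _ a b ha hb hab
    simp only [hφdef, smul_eq_mul]
    have h1 : ⟪v, a • p + b • q⟫ = a * ⟪v, p⟫ + b * ⟪v, q⟫ := by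
      rw [inner_add_right, real_inner_smul_right, real_inner_smul_right]
    have h2 : ‖a • p + b • q‖ ≤ a * ‖p‖ + b * ‖q‖ := by
      calc ‖a • p + b • q‖ ≤ ‖a • p‖ + ‖b • q‖ := norm_add_le _ _
        _ = a * ‖p‖ + b * ‖q‖ := by
          rw [norm_smul, norm_smul, Real.norm_eq_abs, Real.norm_eq_abs,
            abs_of_nonneg ha, abs_of_nonneg hb]
    have habc : a * c + b * c = c := by rw [← add_mul, hab, one_mul]
    nlinarith [mul_le_mul_of_nonneg_left h2 hδ.le]
  have hle : ∀ p, φ p ≤ g p := by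
    intro p
    have h1 := hv p
    have h2 := (abs_le.mp (hfg p)).2
    have h3 : 0 ≤ ‖p‖ := norm_nonneg p
    simp only [hφdef, hc]
    nlinarith
  obtain ⟨w, β, h1, h2⟩ := sandwich g φ hg hgc hφ hle
  have hβ : -c ≤ β := by
    have := h1 0
    simp [hφdef] at this
    linarith
  refine ⟨w, ?_, ?_⟩
  · have hq : ∀ q : Eucl n, ⟪v - w, q⟫ - δ * ‖q‖ ≤ 0 := by
      intro q
      apply scalar_aux (M := β + c)
      intro s hs
      have := h1 (s • q)
      simp only [hφdef] at this
      rw [real_inner_smul_right, real_inner_smul_right, norm_smul, Real.norm_eq_abs,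
        abs_of_pos hs] at this
      have hexp : ⟪v - w, q⟫ = ⟪v, q⟫ - ⟪w, q⟫ := inner_sub_left v w q
      nlinarith
    have h3 := hq (v - w)
    rw [real_inner_self_eq_norm_sq] at h3
    have h4 : 0 ≤ ‖v - w‖ := norm_nonneg _
    nlinarith
  · intro p
    have := h2 p
    linarith

/-- Proposition 6.4 of the paper. If Hamiltonians `H_i`, convex in the
last variable, converge to `H` in the weighted uniform sense
`sup_{(t,x,p) ∈ [0,T]×B_R×ℝⁿ} |H_i − H|/(1+|p|) → 0` for every `R > 0`, then the
epigraphs converge uniformly in the Hausdorff distance: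
`sup_{(t,x) ∈ [0,T]×B_R} ℋ(E_{L_i}(t,x), E_L(t,x)) → 0` for every `R > 0`. -/
theorem epigraph_hausdorff_convergence (n : ℕ) (T : ℝ) (hT : 0 ≤ T)
    (Hi : ℕ → ℝ → Eucl n → Eucl n → ℝ) (H : ℝ → Eucl n → Eucl n → ℝ)
    (hHic : ∀ i, ContinuousOn (fun q : ℝ × Eucl n × Eucl n => Hi i q.1 q.2.1 q.2.2)
      (Icc (0 : ℝ) T ×ˢ (univ : Set (Eucl n × Eucl n))))
    (hHc : ContinuousOn (fun q : ℝ × Eucl n × Eucl n => H q.1 q.2.1 q.2.2)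
      (Icc (0 : ℝ) T ×ˢ (univ : Set (Eucl n × Eucl n))))
    (hHiconv : ∀ i, ∀ t ∈ Icc (0 : ℝ) T, ∀ x : Eucl n, ConvexOn ℝ univ (Hi i t x))
    (hHconv : ∀ t ∈ Icc (0 : ℝ) T, ∀ x : Eucl n, ConvexOn ℝ univ (H t x))
    (hunif : ∀ R > (0 : ℝ), ∀ ε > (0 : ℝ), ∃ i₀ : ℕ, ∀ i ≥ i₀,
      ∀ t ∈ Icc (0 : ℝ) T, ∀ x ∈ closedBall (0 : Eucl n) R, ∀ p : Eucl n,
        |Hi i t x p - H t x p| ≤ ε * (1 + ‖p‖)) :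
    ∀ R > (0 : ℝ), ∀ ε > (0 : ℝ), ∃ i₀ : ℕ, ∀ i ≥ i₀,
      ∀ t ∈ Icc (0 : ℝ) T, ∀ x ∈ closedBall (0 : Eucl n) R,
        EMetric.hausdorffEdist (epiL (Hi i) t x) (epiL H t x) ≤ ENNReal.ofReal ε := by
  intro R hR ε hε
  obtain ⟨i₀, hi₀⟩ := hunif R hR ε hε
  refine ⟨i₀, fun i hi t ht x hx => ?_⟩
  have hcont : ∀ (G : ℝ → Eucl n → Eucl n → ℝ),
      ContinuousOn (fun q : ℝ × Eucl n × Eucl n => G q.1 q.2.1 q.2.2)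
        (Icc (0 : ℝ) T ×ˢ (univ : Set (Eucl n × Eucl n))) → Continuous (G t x) := by
    intro G hG
    rw [← continuousOn_univ]
    have hm : Continuous (fun p : Eucl n => ((t, (x, p)) : ℝ × Eucl n × Eucl n)) := by
      fun_prop
    exact hG.comp hm.continuousOn (fun p _ => ⟨ht, trivial⟩)
  have hgc : Continuous (H t x) := hcont H hHc
  have hgic : Continuous (Hi i t x) := hcont (Hi i) (hHic i)
  have hbound := hi₀ i hi t ht x hx
  have hedist : ∀ (a : ℝ), edist a (a + ε) = ENNReal.ofReal ε := by
    intro a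
    rw [edist_dist, Real.dist_eq, show a - (a + ε) = -ε by ring, abs_neg, abs_of_pos hε]
  apply EMetric.hausdorffEdist_le_of_mem_edist
  · intro q hq
    have hq' : (⨆ p : Eucl n, ((⟪q.1, p⟫ - Hi i t x p : ℝ) : EReal)) ≤ ((q.2 : ℝ) : EReal) := hq
    have hv : ∀ p, ⟪q.1, p⟫ - Hi i t x p ≤ q.2 := by
      intro p
      have h := le_trans (le_iSup (fun p : Eucl n => ((⟪q.1, p⟫ - Hi i t x p : ℝ) : EReal)) p) hq'
      exact_mod_cast h
    obtain ⟨w, hw1, hw2⟩ := key_lemma (Hi i t x) (H t x) (hHconv t ht x) hgc ε hε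
      hbound q.1 q.2 hv
    refine ⟨(w, q.2 + ε), ?_, ?_⟩
    · show (⨆ p : Eucl n, ((⟪w, p⟫ - H t x p : ℝ) : EReal)) ≤ ((q.2 + ε : ℝ) : EReal)
      exact iSup_le fun p => EReal.coe_le_coe_iff.mpr (hw2 p)
    · rw [Prod.edist_eq]
      apply max_le
      · rw [edist_dist, dist_eq_norm]
        exact ENNReal.ofReal_le_ofReal hw1
      · exact le_of_eq (hedist q.2)
  · intro q hq
    have hq' : (⨆ p : Eucl n, ((⟪q.1, p⟫ - H t x p : ℝ) : EReal)) ≤ ((q.2 : ℝ) : EReal) := hq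
    have hv : ∀ p, ⟪q.1, p⟫ - H t x p ≤ q.2 := by
      intro p
      have h := le_trans (le_iSup (fun p : Eucl n => ((⟪q.1, p⟫ - H t x p : ℝ) : EReal)) p) hq'
      exact_mod_cast h
    obtain ⟨w, hw1, hw2⟩ := key_lemma (H t x) (Hi i t x) (hHiconv i t ht x) hgic ε hε
      (fun p => by rw [abs_sub_comm]; exact hbound p) q.1 q.2 hv
    refine ⟨(w, q.2 + ε), ?_, ?_⟩
    · show (⨆ p : Eucl n, ((⟪w, p⟫ - Hi i t x p : ℝ) : EReal)) ≤ ((q.2 + ε : ℝ) : EReal)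
      exact iSup_le fun p => EReal.coe_le_coe_iff.mpr (hw2 p)
    · rw [Prod.edist_eq]
      apply max_le
      · rw [edist_dist, dist_eq_norm]
        exact ENNReal.ofReal_le_ofReal hw1
      · exact le_of_eq (hedist q.2)
end
end
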